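/- arXiv:1206.0937 — 4 statements merged into one kernel-verified Lean document; each statement's English description precedes it below -/
import Mathlib

section
/- For any real r > 0 and δ > 0, (e^δ / (1+δ)^(1+δ))^r ≤ exp(- δ² r / (2 + δ)). -/
open Real

private lemma key_mono (s : ℝ) (hs : 0 ≤ s) :
    (1 - s) * Real.exp s ≤ (1 + s) * Real.exp (-s) := by
  set f : ℝ → ℝ := fun t => (1 + t) * Real.exp (-t) - (1 - t) * Real.exp t with hf
  have hderiv : ∀ x : ℝ, HasDerivAt f (x * (Real.exp x - Real.exp (-x))) x := by
    intro x
    have he : HasDerivAt (fun t : ℝ => Real.exp (-t)) (-Real.exp (-x)) x := by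
      simpa using (hasDerivAt_neg x).exp
    have h1 : HasDerivAt (fun t : ℝ => (1 + t) * Real.exp (-t))
        (1 * Real.exp (-x) + (1 + x) * (-Real.exp (-x))) x :=
      HasDerivAt.mul ((hasDerivAt_id x).const_add 1) he
    have h2 : HasDerivAt (fun t : ℝ => (1 - t) * Real.exp t)
        ((-1) * Real.exp x + (1 - x) * Real.exp x) x :=
      HasDerivAt.mul ((hasDerivAt_id x).neg.const_add 1) (Real.hasDerivAt_exp x)
    have := h1.sub h2
    exact this.congr_deriv (by ring)
  have hmono : MonotoneOn f (Set.Ici (0 : ℝ)) := by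
    apply monotoneOn_of_deriv_nonneg (convex_Ici 0)
    · exact (Continuous.continuousOn (by continuity))
    · intro x hx
      exact (hderiv x).differentiableAt.differentiableWithinAt
    · intro x hx
      rw [(hderiv x).deriv]
      have hx0 : (0:ℝ) < x := by simpa using hx
      have : Real.exp (-x) ≤ Real.exp x := Real.exp_le_exp.2 (by linarith)
      nlinarith
  have h0 : f 0 = 0 := by simp [hf]
  have := hmono (Set.self_mem_Ici) (Set.mem_Ici.2 hs) hs
  rw [h0] at this
  simp only [hf] at this
  linarith

private lemma key_log (δ : ℝ) (hδ : 0 < δ) : 2 * δ / (2 + δ) ≤ Real.log (1 + δ) := by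
  have h2δ : (0:ℝ) < 2 + δ := by linarith
  set s : ℝ := δ / (2 + δ) with hs
  have hs0 : 0 ≤ s := le_of_lt (div_pos hδ h2δ)
  have hs1 : s < 1 := by
    rw [hs, div_lt_one h2δ]; linarith
  have hk := key_mono s hs0
  -- exp (2 s) ≤ (1+s)/(1-s)
  have h1s : (0:ℝ) < 1 - s := by linarith
  have hexp : Real.exp (2 * s) ≤ (1 + s) / (1 - s) := by
    rw [le_div_iff₀ h1s]
    have : Real.exp (2 * s) * (1 - s) = ((1 - s) * Real.exp s) * Real.exp s := by
      rw [two_mul, Real.exp_add]; ring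
    rw [this]
    calc ((1 - s) * Real.exp s) * Real.exp s ≤ ((1 + s) * Real.exp (-s)) * Real.exp s := by
          apply mul_le_mul_of_nonneg_right hk (Real.exp_pos s).le
      _ = 1 + s := by rw [mul_assoc, ← Real.exp_add]; simp
  have hval : (1 + s) / (1 - s) = 1 + δ := by
    rw [hs]
    field_simp
    ring
  have h2s : 2 * s = 2 * δ / (2 + δ) := by rw [hs]; ring
  rw [hval, h2s] at hexp
  have h1δ : (0:ℝ) < 1 + δ := by linarith
  exact (Real.le_log_iff_exp_le h1δ).2 hexp

theorem chernoff_to_bernstein (r δ : ℝ) (hr : r > 0) (hδ : δ > 0) :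
    (Real.exp δ / (1 + δ) ^ (1 + δ)) ^ r ≤ Real.exp (-(δ ^ 2 * r) / (2 + δ)) := by
  have h1δ : (0:ℝ) < 1 + δ := by linarith
  have h2δ : (0:ℝ) < 2 + δ := by linarith
  have hpow : (1 + δ) ^ (1 + δ) = Real.exp ((1 + δ) * Real.log (1 + δ)) := by
    rw [Real.rpow_def_of_pos h1δ, mul_comm]
  have hbase : Real.exp δ / (1 + δ) ^ (1 + δ)
      = Real.exp (δ - (1 + δ) * Real.log (1 + δ)) := by
    rw [hpow, ← Real.exp_sub]
  rw [hbase, ← Real.exp_mul]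
  apply Real.exp_le_exp.2
  have hlog := key_log δ hδ
  have hkey : δ - (1 + δ) * Real.log (1 + δ) ≤ -(δ ^ 2) / (2 + δ) := by
    have h1 : (1 + δ) * (2 * δ / (2 + δ)) ≤ (1 + δ) * Real.log (1 + δ) :=
      mul_le_mul_of_nonneg_left hlog h1δ.le
    have h2 : δ - (1 + δ) * (2 * δ / (2 + δ)) = -(δ ^ 2) / (2 + δ) := by
      field_simp
      ring
    linarith
  calc (δ - (1 + δ) * Real.log (1 + δ)) * r ≤ (-(δ ^ 2) / (2 + δ)) * r := by
        apply mul_le_mul_of_nonneg_right hkey hr.le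
    _ = -(δ ^ 2 * r) / (2 + δ) := by ring
end

section
/- Let X be hypergeometric (the size of the intersection of a fixed p-subset with a uniformly random p-subset of an n-set) and let Y = Σᵢ₌₁^p zᵢ be a sum of p i.i.d. Bernoulli(p/n) random variables. Then for every t > 0, E[e^{tX}] ≤ E[e^{tY}]. -/
open MeasureTheory Finset
open scoped ENNReal

-- binomial theorem over powersets
lemma sum_powerset_pow {α : Type*} [DecidableEq α] (s : Finset α) (x : ℝ) :
    ∑ T ∈ s.powerset, x ^ T.card = (x + 1) ^ s.card := by
  induction s using Finset.induction_on with
  | empty => simp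
  | @insert a s ha ih =>
    rw [Finset.sum_powerset_insert ha, ih, Finset.card_insert_of_notMem ha]
    have : ∑ T ∈ s.powerset, x ^ (insert a T).card = x * ∑ T ∈ s.powerset, x ^ T.card := by
      rw [Finset.mul_sum]
      refine Finset.sum_congr rfl fun T hT => ?_
      rw [Finset.card_insert_of_notMem fun hc => ha (Finset.mem_powerset.mp hT hc), pow_succ,
        mul_comm]
    rw [this, ih]
    ring

-- counting supersets
lemma card_filter_superset {n p m : ℕ} (T : Finset (Fin n)) (hT : T.card = m) (hm : m ≤ p) :
    ((Finset.univ.powersetCard p).filter (fun S => T ⊆ S)).card = (n - m).choose (p - m) := by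
  rw [show (n - m).choose (p - m) = ((Tᶜ).powersetCard (p - m)).card by
    rw [Finset.card_powersetCard, Finset.card_compl, hT, Fintype.card_fin]]
  · apply Finset.card_bij' (fun S _ => S \ T) (fun R _ => R ∪ T)
    · intro S hS
      simp only [Finset.mem_filter, Finset.mem_powersetCard_univ] at hS
      simp only [Finset.mem_powersetCard]
      constructor
      · intro x hx; simp only [Finset.mem_sdiff] at hx; simp [Finset.mem_compl, hx.2]
      · rw [Finset.card_sdiff_of_subset hS.2, hS.1, hT]
    · intro R hR
      simp only [Finset.mem_powersetCard] at hR
      simp only [Finset.mem_filter, Finset.mem_powersetCard_univ]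
      have hdisj : Disjoint R T := by
        rw [Finset.disjoint_right]
        intro x hxT hxR
        exact (Finset.mem_compl.mp (hR.1 hxR)) hxT
      constructor
      · rw [Finset.card_union_of_disjoint hdisj, hR.2, hT]
        omega
      · exact Finset.subset_union_right
    · intro S hS
      simp only [Finset.mem_filter] at hS
      exact Finset.sdiff_union_of_subset hS.2
    · intro R hR
      simp only [Finset.mem_powersetCard] at hR
      rw [Finset.union_sdiff_right]
      apply Finset.sdiff_eq_self_of_disjoint
      rw [Finset.disjoint_right]
      intro x hxT hxR
      exact (Finset.mem_compl.mp (hR.1 hxR)) hxT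
lemma choose_sub_mul_pow_le {n p : ℕ} (hpn : p ≤ n) :
    ∀ m, m ≤ p → (n - m).choose (p - m) * n ^ m ≤ n.choose p * p ^ m := by
  intro m
  induction m with
  | zero => simp
  | succ m ih =>
    intro hm
    have hmp : m ≤ p := Nat.le_of_succ_le hm
    have ihm := ih hmp
    have hmn : m < n := lt_of_lt_of_le hm hpn
    have key : (n - m) * ((n - (m+1)).choose (p - (m+1))) = (n - m).choose (p - m) * (p - m) := by
      have h1 : n - (m+1) + 1 = n - m := by omega
      have h2 : p - (m+1) + 1 = p - m := by omega
      calc (n - m) * (n - (m+1)).choose (p - (m+1))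
          = (n - (m+1) + 1) * (n - (m+1)).choose (p - (m+1)) := by rw [h1]
        _ = (n - (m+1) + 1).choose (p - (m+1) + 1) * (p - (m+1) + 1) :=
            Nat.add_one_mul_choose_eq _ _
        _ = (n - m).choose (p - m) * (p - m) := by rw [h1, h2]
    have hcross : n * (p - m) ≤ p * (n - m) := by
      have h1 : n * (p - m) = n * p - n * m := by rw [Nat.mul_sub]
      have h2 : p * (n - m) = p * n - p * m := by rw [Nat.mul_sub]
      have h3 : n * m ≥ p * m := Nat.mul_le_mul_right m hpn
      have h5 : n * m ≤ n * p := Nat.mul_le_mul_left n hmp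
      have h6 : n * p = p * n := Nat.mul_comm n p
      omega
    apply Nat.le_of_mul_le_mul_right _ (show 0 < n - m by omega)
    calc (n - (m+1)).choose (p - (m+1)) * n ^ (m+1) * (n - m)
        = ((n - m) * (n - (m+1)).choose (p - (m+1))) * (n ^ m * n) := by ring
      _ = ((n - m).choose (p - m) * (p - m)) * (n ^ m * n) := by rw [key]
      _ = ((n - m).choose (p - m) * n ^ m) * (n * (p - m)) := by ring
      _ ≤ (n.choose p * p ^ m) * (p * (n - m)) := Nat.mul_le_mul ihm hcross
      _ = n.choose p * p ^ (m+1) * (n - m) := by ring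

lemma integral_bernoulli_pi (n p : ℕ) (h : ((p : ℝ≥0∞) / n) ≤ 1) (t : ℝ) :
    (∫ z : Fin p → Bool,
        Real.exp (t * ∑ i, (if z i then (1 : ℝ) else 0))
        ∂(Measure.pi fun _ : Fin p => (PMF.bernoulli ((p : ℝ≥0∞) / n).toNNReal
              (by simpa using ENNReal.toNNReal_mono ENNReal.one_ne_top h)).toMeasure))
    = ((1 - (p : ℝ)/n) + (p : ℝ)/n * Real.exp t) ^ p := by
  set q : ℝ≥0∞ := (p : ℝ≥0∞) / n with hqdef
  have hq : q.toReal = (p : ℝ)/n := by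
    rw [hqdef, ENNReal.toReal_div]; simp
  have h1q : (1 - q).toReal = 1 - (p : ℝ)/n := by
    rw [ENNReal.toReal_sub_of_le h (by norm_num), hq]; simp
  have hsing : ∀ z : Fin p → Bool,
      ((Measure.pi fun _ : Fin p => (PMF.bernoulli q.toNNReal (by simpa using ENNReal.toNNReal_mono ENNReal.one_ne_top h)).toMeasure) {z}).toReal
        = ∏ i, (if z i then (p : ℝ)/n else 1 - (p : ℝ)/n) := by
    intro z
    rw [← Set.univ_pi_singleton, Measure.pi_pi, ENNReal.toReal_prod]
    refine Finset.prod_congr rfl fun i _ => ?_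
    rw [PMF.toMeasure_apply_singleton _ _ (measurableSet_singleton _)]
    erw [PMF.bernoulli_apply]
    have hle : q.toNNReal ≤ 1 := by simpa using ENNReal.toNNReal_mono ENNReal.one_ne_top h
    have hq' : (q.toNNReal : ℝ) = (p : ℝ)/n := by rw [ENNReal.coe_toNNReal_eq_toReal, hq]
    have h1q' : ((1 - q.toNNReal : NNReal) : ℝ) = 1 - (p : ℝ)/n := by
      rw [NNReal.coe_sub hle, hq']; simp
    have hqt : ((q.toNNReal : ℝ≥0∞)) = q := ENNReal.coe_toNNReal (ne_top_of_le_ne_top ENNReal.one_ne_top h)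
    cases z i
    · simp [hq', h1q', hqt, h1q]
    · simp [hq', h1q', hqt, h1q]
      exact hq
  rw [MeasureTheory.integral_fintype]
  · calc ∑ z : Fin p → Bool,
        ((Measure.pi fun _ : Fin p => (PMF.bernoulli q.toNNReal (by simpa using ENNReal.toNNReal_mono ENNReal.one_ne_top h)).toMeasure) {z}).toReal
          • Real.exp (t * ∑ i, (if z i then (1 : ℝ) else 0))
        = ∑ z : Fin p → Bool, ∏ i,
            ((if z i then (p : ℝ)/n else 1 - (p : ℝ)/n)
              * Real.exp (t * (if z i then (1 : ℝ) else 0))) := by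
          refine Finset.sum_congr rfl fun z _ => ?_
          rw [smul_eq_mul, hsing z, Finset.mul_sum, Real.exp_sum, ← Finset.prod_mul_distrib]
      _ = ∏ i : Fin p, ∑ b : Bool,
            ((if b then (p : ℝ)/n else 1 - (p : ℝ)/n)
              * Real.exp (t * (if b then (1 : ℝ) else 0))) := by
          rw [Finset.prod_univ_sum, Fintype.piFinset_univ]
      _ = ((1 - (p : ℝ)/n) + (p : ℝ)/n * Real.exp t) ^ p := by
          rw [Finset.prod_const]
          simp [Fintype.sum_bool, mul_comm, add_comm]
  · exact .of_finite

/-- Hoeffding's comparison: the MGF of the hypergeometric overlap `|S ∩ S'|` (sampling without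
replacement) is dominated by the MGF of a sum of `p` i.i.d. Bernoulli(`p/n`) variables. -/
theorem hypergeometric_mgf_le_binomial_mgf (n p : ℕ) (hp : 0 < p) (hpn : p ≤ n)
    (h : ((p : ℝ≥0∞) / n) ≤ 1) (S' : Finset (Fin n)) (hS' : S'.card = p)
    (t : ℝ) (ht : 0 < t) :
    (∑ S ∈ (Finset.univ : Finset (Fin n)).powersetCard p,
        Real.exp (t * ((S ∩ S').card : ℝ))) / (n.choose p : ℝ)
      ≤ ∫ z : Fin p → Bool,
          Real.exp (t * ∑ i, (if z i then (1 : ℝ) else 0))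
          ∂(Measure.pi fun _ : Fin p => (PMF.bernoulli ((p : ℝ≥0∞) / n).toNNReal
              (by simpa using ENNReal.toNNReal_mono ENNReal.one_ne_top h)).toMeasure) := by
  have hn : 0 < n := lt_of_lt_of_le hp hpn
  have hnR : (0 : ℝ) < n := by exact_mod_cast hn
  set c : ℝ := Real.exp t - 1 with hcdef
  have hc : 0 ≤ c := by
    rw [hcdef, sub_nonneg]
    exact Real.one_le_exp ht.le
  rw [integral_bernoulli_pi n p h t]
  have hCpos : (0 : ℝ) < (n.choose p : ℝ) := by exact_mod_cast Nat.choose_pos hpn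
  rw [div_le_iff₀ hCpos]
  have key : (∑ S ∈ (Finset.univ : Finset (Fin n)).powersetCard p,
      Real.exp (t * ((S ∩ S').card : ℝ)))
      = ∑ T ∈ S'.powerset, c ^ T.card * ((n - T.card).choose (p - T.card) : ℝ) := by
    calc ∑ S ∈ (Finset.univ : Finset (Fin n)).powersetCard p,
          Real.exp (t * ((S ∩ S').card : ℝ))
        = ∑ S ∈ (Finset.univ : Finset (Fin n)).powersetCard p,
            ∑ T ∈ S'.powerset, (if T ⊆ S then c ^ T.card else 0) := by
          refine Finset.sum_congr rfl fun S _ => ?_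
          rw [mul_comm, Real.exp_nat_mul, show Real.exp t = c + 1 by rw [hcdef]; ring,
            ← sum_powerset_pow]
          rw [show (S ∩ S').powerset = S'.powerset.filter (fun T => T ⊆ S) by
            ext T
            simp only [Finset.mem_powerset, Finset.mem_filter, Finset.subset_inter_iff]
            tauto]
          rw [Finset.sum_filter]
      _ = ∑ T ∈ S'.powerset, ∑ S ∈ (Finset.univ : Finset (Fin n)).powersetCard p,
            (if T ⊆ S then c ^ T.card else 0) := Finset.sum_comm
      _ = ∑ T ∈ S'.powerset, c ^ T.card * ((n - T.card).choose (p - T.card) : ℝ) := by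
          refine Finset.sum_congr rfl fun T hT => ?_
          rw [← Finset.sum_filter, Finset.sum_const,
            card_filter_superset T rfl ((hS' ▸ Finset.card_le_card (Finset.mem_powerset.mp hT))),
            nsmul_eq_mul, mul_comm]
  rw [key]
  calc ∑ T ∈ S'.powerset, c ^ T.card * ((n - T.card).choose (p - T.card) : ℝ)
      ≤ ∑ T ∈ S'.powerset, c ^ T.card * (((p : ℝ)/n) ^ T.card * (n.choose p : ℝ)) := by
        refine Finset.sum_le_sum fun T hT => ?_
        refine mul_le_mul_of_nonneg_left ?_ (pow_nonneg hc _)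
        have hm : T.card ≤ p := hS' ▸ Finset.card_le_card (Finset.mem_powerset.mp hT)
        have hnat := choose_sub_mul_pow_le hpn T.card hm
        rw [div_pow, div_mul_eq_mul_div, le_div_iff₀ (by positivity)]
        calc ((n - T.card).choose (p - T.card) : ℝ) * (n : ℝ) ^ T.card
            = (((n - T.card).choose (p - T.card) * n ^ T.card : ℕ) : ℝ) := by push_cast; ring
          _ ≤ ((n.choose p * p ^ T.card : ℕ) : ℝ) := by exact_mod_cast hnat
          _ = (p : ℝ) ^ T.card * (n.choose p : ℝ) := by push_cast; ring
    _ = (∑ T ∈ S'.powerset, (c * ((p : ℝ)/n)) ^ T.card) * (n.choose p : ℝ) := by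
        rw [Finset.sum_mul]
        refine Finset.sum_congr rfl fun T _ => ?_
        rw [mul_pow]; ring
    _ = (1 - (p : ℝ)/n + (p : ℝ)/n * Real.exp t) ^ p * (n.choose p : ℝ) := by
        rw [sum_powerset_pow, hS']
        congr 1
        rw [hcdef]; ring_nf
end

section
/- (Foster's Theorem) Let G be a connected finite graph on n vertices with combinatorial Laplacian Δ = ∇ᵀ∇. For an edge e = (v,w), define its effective resistance r_e = (δ_v − δ_w)ᵀ Δ† (δ_v − δ_w), where Δ† is the Moore–Penrose pseudoinverse. Then Σ_{e ∈ E(G)} r_e = n − 1. -/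
open Matrix

/-- `Mdag` is the Moore–Penrose pseudoinverse of `M`. -/
def IsMoorePenroseInv {V : Type*} [Fintype V] [DecidableEq V]
    (M Mdag : Matrix V V ℝ) : Prop :=
  M * Mdag * M = M ∧ Mdag * M * Mdag = Mdag ∧
    (M * Mdag)ᵀ = M * Mdag ∧ (Mdag * M)ᵀ = Mdag * M

/-- The effective resistance between `v` and `w`: `(δ_v - δ_w)ᵀ Δ† (δ_v - δ_w)`. -/
noncomputable def effRes {V : Type*} [Fintype V] [DecidableEq V]
    (Ldag : Matrix V V ℝ) (v w : V) : ℝ :=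
  (Pi.single v 1 - Pi.single w 1) ⬝ᵥ Ldag.mulVec (Pi.single v 1 - Pi.single w 1)

/-- The effective resistance as a function of an (undirected) edge. -/
noncomputable def effResSym2 {V : Type*} [Fintype V] [DecidableEq V]
    (Ldag : Matrix V V ℝ) : Sym2 V → ℝ :=
  Sym2.lift ⟨effRes Ldag, by
    intro a b
    unfold effRes
    rw [show (Pi.single b 1 - Pi.single a 1 : V → ℝ) = -(Pi.single a 1 - Pi.single b 1) from
      (neg_sub _ _).symm]
    rw [Matrix.mulVec_neg, dotProduct_neg, neg_dotProduct, neg_neg]⟩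

lemma effRes_eq' {V : Type*} [Fintype V] [DecidableEq V]
    (Ldag : Matrix V V ℝ) (v w : V) :
    effRes Ldag v w = Ldag v v + Ldag w w - Ldag v w - Ldag w v := by
  simp only [effRes, Matrix.mulVec_sub, Matrix.mulVec_single_one, sub_dotProduct,
    dotProduct_sub, single_dotProduct, Matrix.col_apply, mul_one, one_mul, Pi.sub_apply]
  ring

/-- Twice the sum of a function over the edges equals the sum over ordered adjacent pairs. -/
lemma two_mul_sum_edgeFinset' {V : Type*} [Fintype V] [DecidableEq V]
    (G : SimpleGraph V) [DecidableRel G.Adj] (f : Sym2 V → ℝ) :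
    2 * ∑ e ∈ G.edgeFinset, f e =
      ∑ v : V, ∑ w : V, if G.Adj v w then f s(v, w) else 0 := by
  classical
  have hdart : ∑ d : G.Dart, f d.edge = ∑ e ∈ G.edgeFinset, 2 * f e := by
    rw [← Finset.sum_fiberwise_of_maps_to (g := SimpleGraph.Dart.edge)
      (t := G.edgeFinset) (fun d _ => by simp [SimpleGraph.Dart.edge_mem])]
    refine Finset.sum_congr rfl fun e he => ?_
    rw [Finset.sum_congr rfl (fun d hd => show f d.edge = f e by
        simp only [Finset.mem_filter] at hd; rw [hd.2]),
      Finset.sum_const]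
    have := G.dart_edge_fiber_card e (by rwa [← SimpleGraph.mem_edgeFinset] )
    rw [show (Finset.univ.filter fun d : G.Dart => d.edge = e) =
      ({d : G.Dart | d.edge = e} : Finset _) from rfl, this]
    simp [two_mul]
  have hpairs : ∑ d : G.Dart, f d.edge =
      ∑ v : V, ∑ w : V, if G.Adj v w then f s(v, w) else 0 := by
    rw [← Finset.sum_product', ← Finset.sum_filter]
    refine (Finset.sum_bij' (i := fun p hp => SimpleGraph.Dart.mk p
        (by simpa using (Finset.mem_filter.mp hp).2))
      (j := fun (d : G.Dart) _ => (d.fst, d.snd)) ?_ ?_ ?_ ?_ ?_).symm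
    · intro p hp; exact Finset.mem_univ _
    · intro d _
      simp only [Finset.mem_filter, Finset.mem_product, Finset.mem_univ, true_and]
      exact d.adj
    · intro p hp; rfl
    · intro d _; cases d; rfl
    · intro p hp; rfl
  rw [hdart] at hpairs
  rw [← hpairs, Finset.mul_sum]

lemma trace_lap_mul' {V : Type*} [Fintype V] [DecidableEq V]
    (G : SimpleGraph V) [DecidableRel G.Adj] (Ldag : Matrix V V ℝ) :
    Matrix.trace (G.lapMatrix ℝ * Ldag) =
      ∑ v : V, (G.degree v : ℝ) * Ldag v v -
        ∑ v : V, ∑ w : V, if G.Adj v w then Ldag w v else 0 := by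
  simp only [Matrix.trace, Matrix.diag, Matrix.mul_apply, SimpleGraph.lapMatrix,
    SimpleGraph.degMatrix, Matrix.sub_apply, Matrix.diagonal_apply,
    SimpleGraph.adjMatrix_apply, sub_mul, ite_mul, one_mul, zero_mul,
    Finset.sum_sub_distrib]
  congr 1
  refine Finset.sum_congr rfl fun v _ => ?_
  simp

lemma sum_effRes_eq_trace' {V : Type*} [Fintype V] [DecidableEq V]
    (G : SimpleGraph V) [DecidableRel G.Adj] (Ldag : Matrix V V ℝ) :
    ∑ e ∈ G.edgeFinset, effResSym2 Ldag e = Matrix.trace (G.lapMatrix ℝ * Ldag) := by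
  classical
  have key := two_mul_sum_edgeFinset' G (effResSym2 Ldag)
  have hlift : ∀ v w : V, effResSym2 Ldag s(v, w) = effRes Ldag v w := fun v w => rfl
  simp only [hlift] at key
  have htr := trace_lap_mul' G Ldag
  have hA : ∑ v : V, ∑ w : V, (if G.Adj v w then Ldag v v else 0) =
      ∑ v : V, (G.degree v : ℝ) * Ldag v v := by
    refine Finset.sum_congr rfl fun v _ => ?_
    rw [G.degree_eq_sum_if_adj (R := ℝ) v, Finset.sum_mul]
    refine Finset.sum_congr rfl fun w _ => ?_
    split <;> simp
  have hB : ∑ v : V, ∑ w : V, (if G.Adj v w then Ldag w w else 0) =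
      ∑ v : V, (G.degree v : ℝ) * Ldag v v := by
    rw [Finset.sum_comm]
    refine Finset.sum_congr rfl fun w _ => ?_
    rw [G.degree_eq_sum_if_adj (R := ℝ) w, Finset.sum_mul]
    refine Finset.sum_congr rfl fun v _ => ?_
    rw [if_congr (G.adj_comm v w) rfl rfl]
    split <;> simp
  have hCD : ∑ v : V, ∑ w : V, (if G.Adj v w then Ldag v w else 0) =
      ∑ v : V, ∑ w : V, (if G.Adj v w then Ldag w v else 0) := by
    rw [Finset.sum_comm]
    refine Finset.sum_congr rfl fun w _ => Finset.sum_congr rfl fun v _ =>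
      if_congr (G.adj_comm v w) rfl rfl
  have hsplit : ∑ v : V, ∑ w : V, (if G.Adj v w then effRes Ldag v w else 0) =
      (∑ v : V, ∑ w : V, (if G.Adj v w then Ldag v v else 0)) +
      (∑ v : V, ∑ w : V, (if G.Adj v w then Ldag w w else 0)) -
      (∑ v : V, ∑ w : V, (if G.Adj v w then Ldag v w else 0)) -
      (∑ v : V, ∑ w : V, (if G.Adj v w then Ldag w v else 0)) := by
    simp only [← Finset.sum_sub_distrib, ← Finset.sum_add_distrib]
    refine Finset.sum_congr rfl fun v _ => Finset.sum_congr rfl fun w _ => ?_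
    rw [effRes_eq']
    split <;> simp
  rw [hsplit, hA, hB, hCD] at key
  linarith

lemma trace_eq_card_sub_one' {V : Type*} [Fintype V] [DecidableEq V]
    (G : SimpleGraph V) [DecidableRel G.Adj] (hconn : G.Connected)
    (Ldag : Matrix V V ℝ)
    (h1 : G.lapMatrix ℝ * Ldag * G.lapMatrix ℝ = G.lapMatrix ℝ) :
    Matrix.trace (G.lapMatrix ℝ * Ldag) = (Fintype.card V : ℝ) - 1 := by
  classical
  set L := G.lapMatrix ℝ
  set f : (V → ℝ) →ₗ[ℝ] (V → ℝ) := Matrix.mulVecLin (L * Ldag) with hf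
  have hrange : LinearMap.range f = LinearMap.range (Matrix.mulVecLin L) := by
    apply le_antisymm
    · rw [hf, Matrix.mulVecLin_mul]
      exact LinearMap.range_comp_le_range _ _
    · conv_lhs => rw [← h1]
      rw [Matrix.mulVecLin_mul (L * Ldag) L]
      exact LinearMap.range_comp_le_range _ _
  have hproj : LinearMap.IsProj (LinearMap.range (Matrix.mulVecLin L)) f := by
    constructor
    · intro x
      rw [← hrange]
      exact LinearMap.mem_range_self f x
    · rintro x hx
      rw [← hrange] at hx
      obtain ⟨y, rfl⟩ := hx
      show f (f y) = f y
      rw [hf]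
      simp only [← Matrix.mulVec_mulVec, Matrix.mulVecLin_apply]
      rw [Matrix.mulVec_mulVec, Matrix.mulVec_mulVec, h1]
  have htrace := hproj.trace
  have htr2 : LinearMap.trace ℝ (V → ℝ) f = Matrix.trace (L * Ldag) := by
    rw [LinearMap.trace_eq_matrix_trace ℝ (Pi.basisFun ℝ V) f]
    congr 1
    rw [LinearMap.toMatrix_eq_toMatrix']
    rw [show f = Matrix.toLin' (L * Ldag) from rfl]
    exact LinearMap.toMatrix'_toLin' (L * Ldag)
  have hker : Module.finrank ℝ (LinearMap.ker (Matrix.mulVecLin L)) = 1 := by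
    have hc : Fintype.card G.ConnectedComponent = 1 := by
      have hsub : Subsingleton G.ConnectedComponent := by
        constructor
        intro a b
        refine SimpleGraph.ConnectedComponent.ind₂ (fun u v => ?_) a b
        exact SimpleGraph.ConnectedComponent.eq.mpr (hconn.preconnected u v)
      have hne : Nonempty G.ConnectedComponent := by
        have := hconn.nonempty
        exact ⟨G.connectedComponentMk (Classical.arbitrary V)⟩
      exact Fintype.card_eq_one_iff.mpr ⟨Classical.arbitrary _, fun y => Subsingleton.elim _ _⟩
    have := G.card_connectedComponent_eq_finrank_ker_toLin'_lapMatrix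
    rw [hc] at this
    have hker_eq : LinearMap.ker (Matrix.mulVecLin L) =
        LinearMap.ker (Matrix.toLin' L) := rfl
    rw [hker_eq, ← this]
  have hrn := LinearMap.finrank_range_add_finrank_ker (Matrix.mulVecLin L)
  rw [hker] at hrn
  have hcard : Module.finrank ℝ (V → ℝ) = Fintype.card V := by
    simp [Module.finrank_pi]
  rw [hcard] at hrn
  have hrank : Module.finrank ℝ (LinearMap.range (Matrix.mulVecLin L)) =
      Fintype.card V - 1 := by omega
  rw [htr2] at htrace
  rw [htrace, hrank]
  have hpos : 1 ≤ Fintype.card V := Fintype.card_pos_iff.mpr hconn.nonempty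
  push_cast [Nat.cast_sub hpos]
  ring

/-- Foster's theorem: in a connected graph on `n` vertices, the effective resistances of the
edges sum to `n - 1`. -/
theorem foster {V : Type*} [Fintype V] [DecidableEq V]
    (G : SimpleGraph V) [DecidableRel G.Adj] (hconn : G.Connected)
    (Ldag : Matrix V V ℝ) (hdag : IsMoorePenroseInv (G.lapMatrix ℝ) Ldag) :
    ∑ e ∈ G.edgeFinset, effResSym2 Ldag e = (Fintype.card V : ℝ) - 1 := by
  rw [sum_effRes_eq_trace' G Ldag]
  exact trace_eq_card_sub_one' G hconn Ldag hdag.1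
end

section
/- Let g ∼ N(μ, σ²) be a real Gaussian with μ ≥ 0 and let τ = μ − σ√(2 log(1/δ)) for δ ∈ (0,1). Then P(g ≤ τ) ≤ δ. Consequently, if a fixed coordinate i* of By satisfies (Bx)_{i*} = μ ≥ σ(√(2log(1/δ)) + √(2log(n/δ))), where y = x + ε with ε ∼ N(0,σ²I) and B orthonormal, then P(‖By‖_∞ ≤ σ√(2log(n/δ))) ≤ δ. -/
open MeasureTheory ProbabilityTheory
open scoped ENNReal

open Real
open scoped NNReal

lemma ttb_exp_mul_pdf (t μ x : ℝ) {v : ℝ≥0} (hv : v ≠ 0) :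
    Real.exp (t * x) * gaussianPDFReal μ v x
      = Real.exp (t * μ + v * t ^ 2 / 2) * gaussianPDFReal (μ + t * v) v x := by
  have hv' : (v : ℝ) ≠ 0 := by exact_mod_cast hv
  unfold gaussianPDFReal
  rw [mul_left_comm, mul_left_comm (Real.exp _), ← Real.exp_add, ← Real.exp_add]
  congr 1
  field_simp
  ring

lemma ttb_integrable_exp (t μ : ℝ) {v : ℝ≥0} (hv : v ≠ 0) :
    Integrable (fun x => Real.exp (t * x)) (gaussianReal μ v) := by
  rw [gaussianReal_of_var_ne_zero _ hv]
  rw [integrable_withDensity_iff (measurable_gaussianPDF _ _)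
    (ae_of_all _ fun x => ENNReal.ofReal_lt_top)]
  have : (fun x => Real.exp (t * x) * (gaussianPDF μ v x).toReal)
      = fun x => Real.exp (t * μ + v * t ^ 2 / 2) * gaussianPDFReal (μ + t * v) v x := by
    funext x
    rw [gaussianPDF, ENNReal.toReal_ofReal (gaussianPDFReal_nonneg _ _ _)]
    exact ttb_exp_mul_pdf t μ x hv
  rw [this]
  exact (integrable_gaussianPDFReal _ _).const_mul _

lemma ttb_integral_exp (t μ : ℝ) {v : ℝ≥0} (hv : v ≠ 0) :
    ∫ x, Real.exp (t * x) ∂(gaussianReal μ v) = Real.exp (t * μ + v * t ^ 2 / 2) := by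
  rw [gaussianReal_of_var_ne_zero _ hv]
  have hpdf : gaussianPDF μ v = fun x => ((gaussianPDFReal μ v x).toNNReal : ℝ≥0∞) := rfl
  rw [hpdf, integral_withDensity_eq_integral_smul
    (by exact (measurable_gaussianPDFReal μ v).real_toNNReal) _]
  have : (fun x => (gaussianPDFReal μ v x).toNNReal • Real.exp (t * x))
      = fun x => Real.exp (t * μ + v * t ^ 2 / 2) * gaussianPDFReal (μ + t * v) v x := by
    funext x
    rw [NNReal.smul_def, smul_eq_mul, Real.coe_toNNReal _ (gaussianPDFReal_nonneg _ _ _),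
      mul_comm]
    exact ttb_exp_mul_pdf t μ x hv
  rw [this, integral_const_mul, integral_gaussianPDFReal_eq_one _ hv, mul_one]

lemma ttb_pi_exp(n : ℕ) {v : ℝ≥0} (hv : v ≠ 0) (c : Fin n → ℝ) (t : ℝ) :
    (∫ ω : Fin n → ℝ, Real.exp (t * ∑ i, c i * ω i)
        ∂(Measure.pi fun _ : Fin n => gaussianReal 0 v))
      = Real.exp (v * t ^ 2 * (∑ i, c i ^ 2) / 2)
    ∧ Integrable (fun ω : Fin n → ℝ => Real.exp (t * ∑ i, c i * ω i))
        (Measure.pi fun _ : Fin n => gaussianReal 0 v) := by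
  letI : MeasureSpace ℝ := ⟨gaussianReal 0 v⟩
  haveI : SigmaFinite (volume : Measure ℝ) :=
    (inferInstance : SigmaFinite (gaussianReal 0 v))
  have hfun : ∀ ω : Fin n → ℝ,
      Real.exp (t * ∑ i, c i * ω i) = ∏ i, Real.exp ((t * c i) * ω i) := by
    intro ω
    rw [← Real.exp_sum, Finset.mul_sum]
    congr 1
    exact Finset.sum_congr rfl fun i _ => by ring
  have hmeq : (Measure.pi fun _ : Fin n => gaussianReal 0 v)
      = (volume : Measure (Fin n → ℝ)) := rfl
  constructor
  · simp_rw [hfun, hmeq]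
    rw [MeasureTheory.integral_fintype_prod_volume_eq_prod (ι := Fin n)
      (fun i x => Real.exp ((t * c i) * x))]
    have : ∀ i : Fin n, (∫ x : ℝ, Real.exp ((t * c i) * x))
        = Real.exp (v * (t * c i) ^ 2 / 2) := by
      intro i
      have := ttb_integral_exp (t * c i) 0 hv
      simp at this; exact this
    rw [Finset.prod_congr rfl fun i _ => this i, ← Real.exp_sum]
    congr 1
    have h2 : ∀ i : Fin n, (v : ℝ) * (t * c i) ^ 2 / 2 = (v : ℝ) * t ^ 2 / 2 * c i ^ 2 :=
      fun i => by ring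
    rw [Finset.sum_congr rfl fun i _ => h2 i, ← Finset.mul_sum]
    ring
  · simp_rw [hfun, hmeq]
    exact MeasureTheory.Integrable.fintype_prod
      (f := fun i x => Real.exp ((t * c i) * x)) fun i => ttb_integrable_exp _ 0 hv

lemma ttb_chernoff{Ω : Type*} [MeasurableSpace Ω] {P : Measure Ω} [IsProbabilityMeasure P]
    {S : Ω → ℝ} {v : ℝ≥0} (hv : 0 < (v : ℝ)) {a : ℝ} (ha : 0 ≤ a)
    (hint : Integrable (fun ω => Real.exp ((-a / v) * S ω)) P)
    (hmgf : mgf S P (-a / v) = Real.exp (v * (-a / v) ^ 2 / 2)) :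
    (P {ω | S ω ≤ -a}).toReal ≤ Real.exp (-(a ^ 2) / (2 * v)) := by
  have ht : -a / (v : ℝ) ≤ 0 := div_nonpos_of_nonpos_of_nonneg (neg_nonpos.mpr ha) hv.le
  have h := measure_le_le_exp_mul_mgf (X := S) (μ := P) (-a) ht hint
  rw [hmgf, ← Real.exp_add] at h
  refine h.trans (le_of_eq ?_)
  congr 1
  field_simp
  ring

lemma ttb_exp_val (σ δ : ℝ) (hσ : 0 < σ) (hδ0 : 0 < δ) (hδ1 : δ < 1) :
    Real.exp (-((σ * Real.sqrt (2 * Real.log (1 / δ))) ^ 2) / (2 * σ ^ 2)) = δ := by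
  have hL : 0 ≤ 2 * Real.log (1 / δ) := by
    have : 0 ≤ Real.log (1 / δ) :=
      Real.log_nonneg (by rw [le_div_iff₀ hδ0]; linarith)
    linarith
  rw [mul_pow, Real.sq_sqrt hL]
  have hσ2 : σ ^ 2 ≠ 0 := by positivity
  have : -(σ ^ 2 * (2 * Real.log (1 / δ))) / (2 * σ ^ 2) = Real.log δ := by
    rw [one_div, Real.log_inv]
    field_simp
  rw [this, Real.exp_log hδ0]

/-- Type II error bound (power half of Theorem 3). First, for `g ∼ N(μ, σ²)` with `μ ≥ 0`,
`P(g ≤ μ - σ√(2 log(1/δ))) ≤ δ`. Consequently, if `B` is orthonormal, `y = x + ε` with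
`ε ∼ N(0, σ²I)`, and some coordinate of `Bx` is at least
`σ(√(2 log(1/δ)) + √(2 log(n/δ)))`, then `P(‖By‖_∞ ≤ σ√(2 log(n/δ))) ≤ δ`. -/
theorem type_two_error_bound (n : ℕ) (σ δ : ℝ) (hσ : 0 < σ) (hδ : δ ∈ Set.Ioo (0 : ℝ) 1)
    (B : Matrix (Fin n) (Fin n) ℝ) (hB : B.transpose * B = 1)
    (x : Fin n → ℝ) (istar : Fin n)
    (hsignal : σ * (Real.sqrt (2 * Real.log (1 / δ)) + Real.sqrt (2 * Real.log (n / δ)))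
      ≤ B.mulVec x istar) :
    (∀ μ : ℝ, 0 ≤ μ →
      gaussianReal μ ⟨σ ^ 2, sq_nonneg σ⟩
          {t | t ≤ μ - σ * Real.sqrt (2 * Real.log (1 / δ))}
        ≤ ENNReal.ofReal δ) ∧
    (Measure.pi fun _ : Fin n => gaussianReal 0 ⟨σ ^ 2, sq_nonneg σ⟩)
        {ε | (⨆ i, |B.mulVec (x + ε) i|) ≤ σ * Real.sqrt (2 * Real.log (n / δ))}
      ≤ ENNReal.ofReal δ := by
  obtain ⟨hδ0, hδ1⟩ := hδ
  set v : ℝ≥0 := ⟨σ ^ 2, sq_nonneg σ⟩ with hv_def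
  have hvR : (v : ℝ) = σ ^ 2 := rfl
  have hvpos : 0 < (v : ℝ) := by rw [hvR]; positivity
  have hv : v ≠ 0 := by
    intro h
    rw [h] at hvpos
    simp at hvpos
  set a : ℝ := σ * Real.sqrt (2 * Real.log (1 / δ)) with ha_def
  have ha : 0 ≤ a := by positivity
  set t : ℝ := -a / v with ht_def
  have hexpval : Real.exp (-(a ^ 2) / (2 * v)) = δ := by
    rw [hvR]; exact ttb_exp_val σ δ hσ hδ0 hδ1
  constructor
  · -- Part 1
    intro μ _
    set γ := gaussianReal μ v with hγ
    have hfun : (fun y : ℝ => Real.exp (t * (y - μ)))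
        = fun y => Real.exp (t * y) / Real.exp (t * μ) := by
      funext y; rw [← Real.exp_sub]; ring_nf
    have hint : Integrable (fun y : ℝ => Real.exp (t * (y - μ))) γ := by
      rw [hfun]; exact (ttb_integrable_exp t μ hv).div_const _
    have hmgf : mgf (fun y : ℝ => y - μ) γ t = Real.exp (v * t ^ 2 / 2) := by
      show (∫ y, Real.exp (t * (y - μ)) ∂γ) = _
      rw [hfun, integral_div, ttb_integral_exp t μ hv, ← Real.exp_sub]
      ring_nf
    have hcher := ttb_chernoff (S := fun y : ℝ => y - μ) hvpos ha hint hmgf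
    have hset : {ω : ℝ | ω - μ ≤ -a} = {y : ℝ | y ≤ μ - a} := by
      ext y; constructor <;> intro h <;> simp only [Set.mem_setOf_eq] at * <;> linarith
    rw [hset, hexpval] at hcher
    rw [← ENNReal.ofReal_toReal (measure_ne_top γ _)]
    exact ENNReal.ofReal_le_ofReal hcher
  · -- Part 2
    set P := Measure.pi fun _ : Fin n => gaussianReal 0 v with hP
    set c : Fin n → ℝ := fun i => B istar i with hc_def
    have hc : (∑ i, c i ^ 2) = 1 := by
      have hBBt : B * B.transpose = 1 := mul_eq_one_comm.mp hB
      have := congrArg (fun M : Matrix (Fin n) (Fin n) ℝ => M istar istar) hBBt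
      simp only [Matrix.mul_apply, Matrix.transpose_apply, Matrix.one_apply_eq] at this
      rw [← this]
      exact Finset.sum_congr rfl fun i _ => by rw [sq]
    set S : (Fin n → ℝ) → ℝ := fun ε => ∑ i, c i * ε i with hS_def
    obtain ⟨hval, hint⟩ := ttb_pi_exp n hv c t
    have hmgf : mgf S P t = Real.exp (v * t ^ 2 / 2) := by
      show (∫ ω, Real.exp (t * S ω) ∂P) = _
      rw [hval, hc, mul_one]
    have hcher := ttb_chernoff (S := S) hvpos ha hint hmgf
    rw [hexpval] at hcher
    set T : ℝ := σ * Real.sqrt (2 * Real.log (n / δ)) with hT_def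
    have hsub : {ε : Fin n → ℝ | (⨆ i, |B.mulVec (x + ε) i|) ≤ T} ⊆ {ω | S ω ≤ -a} := by
      intro ε hε
      simp only [Set.mem_setOf_eq] at hε ⊢
      have h1 : |B.mulVec (x + ε) istar| ≤ T :=
        le_trans (le_ciSup (f := fun i => |B.mulVec (x + ε) i|) (Set.Finite.bddAbove (Set.finite_range _)) istar) hε
      have h2 : B.mulVec (x + ε) istar ≤ T := (le_abs_self _).trans h1
      have h3 : B.mulVec (x + ε) istar = B.mulVec x istar + S ε := by
        rw [Matrix.mulVec_add]
        simp only [Pi.add_apply]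
        simp [hS_def, hc_def, Matrix.mulVec, dotProduct]
      have h4 : σ * (Real.sqrt (2 * Real.log (1 / δ)) + Real.sqrt (2 * Real.log (n / δ)))
          = a + T := by rw [ha_def, hT_def]; ring
      rw [h3] at h2
      rw [h4] at hsignal
      linarith
    calc P {ε | (⨆ i, |B.mulVec (x + ε) i|) ≤ T} ≤ P {ω | S ω ≤ -a} := measure_mono hsub
      _ ≤ ENNReal.ofReal δ := by
          rw [← ENNReal.ofReal_toReal (measure_ne_top P _)]
          exact ENNReal.ofReal_le_ofReal hcher
end
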